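/- For a total map f : E → E' of event structures, f is rigid (preserves causal dependency) if and only if for all configurations x of E and y of E', whenever y ⊆ f(x) there exists a configuration z of E with z ⊆ x and f(z) = y. Moreover such z is unique. -/
import Mathlib


structure EventStructure (E : Type) where
  le : E → E → Prop
  conflict : E → E → Prop
  le_refl : ∀ e, le e e
  le_trans : ∀ {a b c}, le a b → le b c → le a c
  le_antisymm : ∀ {a b}, le a b → le b a → a = b
  finite_causes : ∀ e, {e' | le e' e}.Finite
  conflict_irrefl : ∀ e, ¬ conflict e e
  conflict_symm : ∀ {a b}, conflict a b → conflict b a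
  conflict_le : ∀ {a b c}, conflict a b → le b c → conflict a c

/-- A configuration: consistent and down-closed subset of events. -/
def IsConfig {E : Type} (ES : EventStructure E) (x : Set E) : Prop :=
  (∀ e ∈ x, ∀ e' ∈ x, ¬ ES.conflict e e') ∧
  (∀ e ∈ x, ∀ e', ES.le e' e → e' ∈ x)

/-- A total map of event structures: sends configurations to configurations
and is injective on each configuration. -/
def IsMapES {E E' : Type} (ES : EventStructure E) (ES' : EventStructure E')
    (f : E → E') : Prop :=
  (∀ x, IsConfig ES x → IsConfig ES' (f '' x)) ∧
  (∀ x, IsConfig ES x → ∀ e ∈ x, ∀ e' ∈ x, f e = f e' → e = e')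

/-- A rigid map: preserves causal dependency. -/
def RigidMap {E E' : Type} (ES : EventStructure E) (ES' : EventStructure E')
    (f : E → E') : Prop :=
  ∀ a b, ES.le a b → ES'.le (f a) (f b)

/-- An open map: rigid, with configuration-lifting of extensions. -/
def OpenMapES {E E' : Type} (ES : EventStructure E) (ES' : EventStructure E')
    (f : E → E') : Prop :=
  RigidMap ES ES' f ∧
  ∀ x y, IsConfig ES x → IsConfig ES' y → f '' x ⊆ y →
    ∃ z, IsConfig ES z ∧ x ⊆ z ∧ f '' z = y

theorem rigid_iff_restriction_lifting
    {E E' : Type} (ES : EventStructure E) (ES' : EventStructure E')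
    (f : E → E') (hf : IsMapES ES ES' f) :
    RigidMap ES ES' f ↔
      ∀ x y, IsConfig ES x → IsConfig ES' y → y ⊆ f '' x →
        ∃! z, IsConfig ES z ∧ z ⊆ x ∧ f '' z = y := by

  constructor
  · intro hr x y hx hy hyx
    refine ⟨{e | e ∈ x ∧ f e ∈ y}, ⟨⟨fun e he e' he' => hx.1 e he.1 e' he'.1,
        fun e he e' hle => ⟨hx.2 e he.1 e' hle, hy.2 _ he.2 _ (hr e' e hle)⟩⟩,
        fun e he => he.1, ?_⟩, ?_⟩
    · apply Set.Subset.antisymm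
      · rintro _ ⟨e, he, rfl⟩; exact he.2
      · intro a ha
        obtain ⟨e, he, rfl⟩ := hyx ha
        exact ⟨e, ⟨he, ha⟩, rfl⟩
    · rintro z ⟨hz, hzx, hfz⟩
      apply Set.Subset.antisymm
      · intro e he
        have : f e ∈ y := hfz ▸ ⟨e, he, rfl⟩
        exact ⟨hzx he, this⟩
      · rintro e ⟨hex, hey⟩
        rw [← hfz] at hey
        obtain ⟨e', he', hfe⟩ := hey
        rwa [hf.2 x hx e hex e' (hzx he') hfe.symm]
  · intro H a b hab
    set x : Set E := {e | ES.le e b} with hxdef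
    have hx : IsConfig ES x := by
      constructor
      · intro e he e' he' hc
        exact ES.conflict_irrefl b (ES.conflict_le (ES.conflict_symm (ES.conflict_le hc he')) he)
      · intro e he e' hle; exact ES.le_trans hle he
    have hfx := hf.1 x hx
    set y : Set E' := {a' | a' ∈ f '' x ∧ ES'.le a' (f b)} with hydef
    have hy : IsConfig ES' y := by
      constructor
      · intro e he e' he'; exact hfx.1 e he.1 e' he'.1
      · intro e he e' hle; exact ⟨hfx.2 e he.1 e' hle, ES'.le_trans hle he.2⟩
    obtain ⟨z, ⟨hz, hzx, hfz⟩, -⟩ := H x y hx hy (fun a ha => ha.1)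
    have hbx : b ∈ x := ES.le_refl b
    have hfby : f b ∈ y := ⟨⟨b, hbx, rfl⟩, ES'.le_refl _⟩
    rw [← hfz] at hfby
    obtain ⟨e, hez, hfe⟩ := hfby
    have : e = b := hf.2 x hx e (hzx hez) b hbx hfe
    subst this
    have haz : a ∈ z := hz.2 e hez a hab
    have : f a ∈ y := hfz ▸ ⟨a, haz, rfl⟩
    exact hfe ▸ this.2
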